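/- For every integer n ≥ 0, e_2p_4(n+96) ≡ e_2p_4(n) (mod 4), where e_2p_4(n) is the sum of e_2(λ) over all partitions λ of n with exactly 4 parts. -/

import Mathlib

open Finset

/-- `e_2 p_4(n)`, the sum of the second elementary symmetric polynomial evaluated at
the parts over all partitions of `n` with exactly `4` parts. -/
def e2p4 (n : ℕ) : ℕ :=
  ∑ π ∈ Finset.univ.filter (fun π : Nat.Partition n => Multiset.card π.parts = 4),
    π.parts.esymm 2


def w2 (p : ℕ × ℕ) : ℕ := p.1 * p.2
def w3 (p : ℕ × ℕ × ℕ) : ℕ := p.1*p.2.1 + p.1*p.2.2 + p.2.1*p.2.2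
def w4 (p : ℕ × ℕ × ℕ × ℕ) : ℕ :=
  p.1*p.2.1 + p.1*p.2.2.1 + p.1*p.2.2.2 + p.2.1*p.2.2.1 + p.2.1*p.2.2.2 + p.2.2.1*p.2.2.2

def A2 (m : ℕ) : Finset (ℕ × ℕ) :=
  (range (m+1) ×ˢ range (m+1)).filter
    (fun p => 1 ≤ p.2 ∧ p.2 ≤ p.1 ∧ p.1 + p.2 = m)
def A3 (m : ℕ) : Finset (ℕ × ℕ × ℕ) :=
  (range (m+1) ×ˢ range (m+1) ×ˢ range (m+1)).filter
    (fun p => 1 ≤ p.2.2 ∧ p.2.2 ≤ p.2.1 ∧ p.2.1 ≤ p.1 ∧ p.1 + p.2.1 + p.2.2 = m)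
def A4 (m : ℕ) : Finset (ℕ × ℕ × ℕ × ℕ) :=
  (range (m+1) ×ˢ range (m+1) ×ˢ range (m+1) ×ˢ range (m+1)).filter
    (fun p => 1 ≤ p.2.2.2 ∧ p.2.2.2 ≤ p.2.2.1 ∧ p.2.2.1 ≤ p.2.1 ∧ p.2.1 ≤ p.1 ∧
      p.1 + p.2.1 + p.2.2.1 + p.2.2.2 = m)

lemma mem_A2 {m : ℕ} {p : ℕ × ℕ} :
    p ∈ A2 m ↔ 1 ≤ p.2 ∧ p.2 ≤ p.1 ∧ p.1 + p.2 = m := by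
  simp only [A2, mem_filter, mem_product, mem_range]
  constructor
  · tauto
  · intro h; omega
lemma mem_A3 {m : ℕ} {p : ℕ × ℕ × ℕ} :
    p ∈ A3 m ↔ 1 ≤ p.2.2 ∧ p.2.2 ≤ p.2.1 ∧ p.2.1 ≤ p.1 ∧ p.1 + p.2.1 + p.2.2 = m := by
  simp only [A3, mem_filter, mem_product, mem_range]
  constructor
  · tauto
  · intro h; omega
lemma mem_A4 {m : ℕ} {p : ℕ × ℕ × ℕ × ℕ} :
    p ∈ A4 m ↔ 1 ≤ p.2.2.2 ∧ p.2.2.2 ≤ p.2.2.1 ∧ p.2.2.1 ≤ p.2.1 ∧ p.2.1 ≤ p.1 ∧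
      p.1 + p.2.1 + p.2.2.1 + p.2.2.2 = m := by
  simp only [A4, mem_filter, mem_product, mem_range]
  constructor
  · tauto
  · intro h; omega

lemma sum_A2_succ (n : ℕ) (f : ℕ × ℕ → ℕ) :
    ∑ p ∈ A2 (n+2), f p = f (n+1, 1) + ∑ p ∈ A2 n, f (p.1+1, p.2+1) := by
  rw [← Finset.sum_filter_add_sum_filter_not (A2 (n+2)) (fun p => p.2 = 1)]
  congr 1
  · have h1 : (A2 (n+2)).filter (fun p => p.2 = 1) = {(n+1, 1)} := by
      ext p
      simp only [mem_filter, mem_A2, mem_singleton, Prod.ext_iff]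
      omega
    rw [h1, sum_singleton]
  · refine Finset.sum_nbij' (i := fun p => (p.1 - 1, p.2 - 1))
      (j := fun p => (p.1 + 1, p.2 + 1)) ?_ ?_ ?_ ?_ ?_ <;>
      rintro ⟨x, y⟩ h <;>
      simp only [mem_filter, mem_A2, Prod.ext_iff] at h ⊢
    · omega
    · omega
    · omega
    · omega
    · have h1 : x - 1 + 1 = x := by omega
      have h2 : y - 1 + 1 = y := by omega
      rw [h1, h2]

lemma sum_A3_succ (n : ℕ) (f : ℕ × ℕ × ℕ → ℕ) :
    ∑ p ∈ A3 (n+3), f p = (∑ p ∈ A2 (n+2), f (p.1, p.2, 1))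
      + ∑ p ∈ A3 n, f (p.1+1, p.2.1+1, p.2.2+1) := by
  rw [← Finset.sum_filter_add_sum_filter_not (A3 (n+3)) (fun p => p.2.2 = 1)]
  congr 1
  · refine Finset.sum_nbij' (i := fun p => (p.1, p.2.1))
      (j := fun p => (p.1, p.2, 1)) ?_ ?_ ?_ ?_ ?_
    · rintro ⟨x, y, z⟩ h
      simp only [mem_filter, mem_A2, mem_A3] at h ⊢
      omega
    · rintro ⟨x, y⟩ h
      simp only [mem_filter, mem_A2, mem_A3] at h ⊢
      exact ⟨by omega, trivial⟩
    · rintro ⟨x, y, z⟩ h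
      simp only [mem_filter, mem_A3] at h
      simp only [Prod.ext_iff]
      exact ⟨trivial, trivial, h.2.symm⟩
    · rintro ⟨x, y⟩ h
      rfl
    · rintro ⟨x, y, z⟩ h
      simp only [mem_filter, mem_A3] at h
      rw [h.2]
  · refine Finset.sum_nbij' (i := fun p => (p.1 - 1, p.2.1 - 1, p.2.2 - 1))
      (j := fun p => (p.1 + 1, p.2.1 + 1, p.2.2 + 1)) ?_ ?_ ?_ ?_ ?_ <;>
      rintro ⟨x, y, z⟩ h <;>
      simp only [mem_filter, mem_A3, Prod.ext_iff] at h ⊢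
    · omega
    · omega
    · omega
    · omega
    · have h1 : x - 1 + 1 = x := by omega
      have h2 : y - 1 + 1 = y := by omega
      have h3 : z - 1 + 1 = z := by omega
      rw [h1, h2, h3]

lemma sum_A4_succ (n : ℕ) (f : ℕ × ℕ × ℕ × ℕ → ℕ) :
    ∑ p ∈ A4 (n+4), f p = (∑ p ∈ A3 (n+3), f (p.1, p.2.1, p.2.2, 1))
      + ∑ p ∈ A4 n, f (p.1+1, p.2.1+1, p.2.2.1+1, p.2.2.2+1) := by
  rw [← Finset.sum_filter_add_sum_filter_not (A4 (n+4)) (fun p => p.2.2.2 = 1)]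
  congr 1
  · refine Finset.sum_nbij' (i := fun p => (p.1, p.2.1, p.2.2.1))
      (j := fun p => (p.1, p.2.1, p.2.2, 1)) ?_ ?_ ?_ ?_ ?_
    · rintro ⟨x, y, z, u⟩ h
      simp only [mem_filter, mem_A3, mem_A4] at h ⊢
      omega
    · rintro ⟨x, y, z⟩ h
      simp only [mem_filter, mem_A3, mem_A4] at h ⊢
      exact ⟨by omega, trivial⟩
    · rintro ⟨x, y, z, u⟩ h
      simp only [mem_filter, mem_A4] at h
      simp only [Prod.ext_iff]
      exact ⟨trivial, trivial, trivial, h.2.symm⟩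
    · rintro ⟨x, y, z⟩ h
      rfl
    · rintro ⟨x, y, z, u⟩ h
      simp only [mem_filter, mem_A4] at h
      rw [h.2]
  · refine Finset.sum_nbij' (i := fun p => (p.1 - 1, p.2.1 - 1, p.2.2.1 - 1, p.2.2.2 - 1))
      (j := fun p => (p.1 + 1, p.2.1 + 1, p.2.2.1 + 1, p.2.2.2 + 1)) ?_ ?_ ?_ ?_ ?_ <;>
      rintro ⟨x, y, z, u⟩ h <;>
      simp only [mem_filter, mem_A4, Prod.ext_iff] at h ⊢
    · omega
    · omega
    · omega
    · omega
    · have h1 : x - 1 + 1 = x := by omega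
      have h2 : y - 1 + 1 = y := by omega
      have h3 : z - 1 + 1 = z := by omega
      have h4 : u - 1 + 1 = u := by omega
      rw [h1, h2, h3, h4]

def c2 : ℕ → ℕ
  | 0 => 0 | 1 => 0
  | n+2 => c2 n + 1
def c3 : ℕ → ℕ
  | 0 => 0 | 1 => 0 | 2 => 0
  | n+3 => c3 n + c2 (n+2)
def c4 : ℕ → ℕ
  | 0 => 0 | 1 => 0 | 2 => 0 | 3 => 0
  | n+4 => c4 n + c3 (n+3)
def g2 : ℕ → ℕ
  | 0 => 0 | 1 => 0
  | n+2 => g2 n + (n+1) * c2 n + (n+1)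
def g3 : ℕ → ℕ
  | 0 => 0 | 1 => 0 | 2 => 0
  | n+3 => g3 n + (2*n+3) * c3 n + g2 (n+2) + (n+2) * c2 (n+2)
def g4 : ℕ → ℕ
  | 0 => 0 | 1 => 0 | 2 => 0 | 3 => 0
  | n+4 => g4 n + (3*n+6) * c4 n + g3 (n+3) + (n+3) * c3 (n+3)

theorem c2_eq : ∀ n, ∑ _p ∈ A2 n, 1 = c2 n
  | 0 => by decide
  | 1 => by decide
  | n+2 => by
    rw [sum_A2_succ n (fun _ => 1), c2_eq n, c2]
    omega

theorem c3_eq : ∀ n, ∑ _p ∈ A3 n, 1 = c3 n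
  | 0 => by decide
  | 1 => by decide
  | 2 => by decide
  | n+3 => by
    rw [sum_A3_succ n (fun _ => 1), c3_eq n, c2_eq (n+2), c3]
    omega

theorem c4_eq : ∀ n, ∑ _p ∈ A4 n, 1 = c4 n
  | 0 => by decide
  | 1 => by decide
  | 2 => by decide
  | 3 => by decide
  | n+4 => by
    rw [sum_A4_succ n (fun _ => 1), c4_eq n, c3_eq (n+3), c4]
    omega

theorem g2_eq : ∀ n, ∑ p ∈ A2 n, w2 p = g2 n
  | 0 => by decide
  | 1 => by decide
  | n+2 => by
    rw [sum_A2_succ n w2]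
    have h : ∀ p ∈ A2 n, w2 (p.1+1, p.2+1) = w2 p + (n+1) := by
      rintro ⟨x, y⟩ hp
      obtain ⟨h1, h2, h3⟩ := mem_A2.mp hp
      simp only [w2]
      rw [← h3]
      ring
    rw [Finset.sum_congr rfl h, Finset.sum_add_distrib, g2_eq n, Finset.sum_const,
      smul_eq_mul, Finset.card_eq_sum_ones, c2_eq n]
    show (n+1) * 1 + _ = g2 (n+2)
    rw [g2]
    ring

theorem g3_eq : ∀ n, ∑ p ∈ A3 n, w3 p = g3 n
  | 0 => by decide
  | 1 => by decide
  | 2 => by decide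
  | n+3 => by
    rw [sum_A3_succ n w3]
    have h : ∀ p ∈ A3 n, w3 (p.1+1, p.2.1+1, p.2.2+1) = w3 p + (2*n+3) := by
      rintro ⟨x, y, z⟩ hp
      obtain ⟨h1, h2, h3, h4⟩ := mem_A3.mp hp
      simp only [w3]
      rw [← h4]
      ring
    have h' : ∀ p ∈ A2 (n+2), w3 (p.1, p.2, 1) = w2 p + (n+2) := by
      rintro ⟨x, y⟩ hp
      obtain ⟨h1, h2, h3⟩ := mem_A2.mp hp
      simp only [w3, w2]
      rw [← h3]
      ring
    rw [Finset.sum_congr rfl h, Finset.sum_congr rfl h']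
    have e1 : ∑ x ∈ A3 n, (w3 x + (2*n+3)) = g3 n + c3 n * (2*n+3) := by
      rw [Finset.sum_add_distrib, g3_eq n, Finset.sum_const, smul_eq_mul,
        Finset.card_eq_sum_ones, c3_eq n]
    have e2 : ∑ x ∈ A2 (n+2), (w2 x + (n+2)) = g2 (n+2) + c2 (n+2) * (n+2) := by
      rw [Finset.sum_add_distrib, g2_eq (n+2), Finset.sum_const, smul_eq_mul,
        Finset.card_eq_sum_ones, c2_eq (n+2)]
    rw [e1, e2, g3]
    ring

theorem g4_eq : ∀ n, ∑ p ∈ A4 n, w4 p = g4 n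
  | 0 => by decide
  | 1 => by decide
  | 2 => by decide
  | 3 => by decide
  | n+4 => by
    rw [sum_A4_succ n w4]
    have h : ∀ p ∈ A4 n, w4 (p.1+1, p.2.1+1, p.2.2.1+1, p.2.2.2+1) = w4 p + (3*n+6) := by
      rintro ⟨x, y, z, u⟩ hp
      obtain ⟨h1, h2, h3, h4, h5⟩ := mem_A4.mp hp
      simp only [w4]
      rw [← h5]
      ring
    have h' : ∀ p ∈ A3 (n+3), w4 (p.1, p.2.1, p.2.2, 1) = w3 p + (n+3) := by
      rintro ⟨x, y, z⟩ hp
      obtain ⟨h1, h2, h3, h4⟩ := mem_A3.mp hp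
      simp only [w4, w3]
      rw [← h4]
      ring
    rw [Finset.sum_congr rfl h, Finset.sum_congr rfl h']
    have e1 : ∑ x ∈ A4 n, (w4 x + (3*n+6)) = g4 n + c4 n * (3*n+6) := by
      rw [Finset.sum_add_distrib, g4_eq n, Finset.sum_const, smul_eq_mul,
        Finset.card_eq_sum_ones, c4_eq n]
    have e2 : ∑ x ∈ A3 (n+3), (w3 x + (n+3)) = g3 (n+3) + c3 (n+3) * (n+3) := by
      rw [Finset.sum_add_distrib, g3_eq (n+3), Finset.sum_const, smul_eq_mul,
        Finset.card_eq_sum_ones, c3_eq (n+3)]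
    rw [e1, e2, g4]
    ring

lemma c2_rec (n : ℕ) : c2 (n+2) = c2 n + 1 := by rw [c2]
lemma c3_rec (n : ℕ) : c3 (n+3) = c3 n + c2 (n+2) := by rw [c3]
lemma c4_rec (n : ℕ) : c4 (n+4) = c4 n + c3 (n+3) := by rw [c4]
lemma g2_rec (n : ℕ) : g2 (n+2) = g2 n + (n+1) * c2 n + (n+1) := by rw [g2]
lemma g3_rec (n : ℕ) : g3 (n+3) = g3 n + (2*n+3) * c3 n + g2 (n+2) + (n+2) * c2 (n+2) := by
  rw [g3]
lemma g4_rec (n : ℕ) : g4 (n+4) = g4 n + (3*n+6) * c4 n + g3 (n+3) + (n+3) * c3 (n+3) := by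
  rw [g4]

theorem per : ∀ n : ℕ, c2 (n+96) % 4 = c2 n % 4 ∧ c3 (n+96) % 4 = c3 n % 4 ∧
    c4 (n+96) % 4 = c4 n % 4 ∧ g2 (n+96) % 4 = g2 n % 4 ∧ g3 (n+96) % 4 = g3 n % 4 ∧
    g4 (n+96) % 4 = g4 n % 4
  | 0 => by decide
  | 1 => by decide
  | 2 => by decide
  | 3 => by decide
  | n+4 => by
    obtain ⟨ih2_0, ih3_0, ih4_0, ihg2_0, ihg3_0, ihg4_0⟩ := per n
    obtain ⟨ih2_1, ih3_1, ih4_1, ihg2_1, ihg3_1, ihg4_1⟩ := per (n+1)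
    obtain ⟨ih2_2, ih3_2, ih4_2, ihg2_2, ihg3_2, ihg4_2⟩ := per (n+2)
    obtain ⟨ih2_3, ih3_3, ih4_3, ihg2_3, ihg3_3, ihg4_3⟩ := per (n+3)
    rw [show n+1+96 = n+97 by omega] at ih2_1 ih3_1 ih4_1 ihg2_1 ihg3_1 ihg4_1
    rw [show n+2+96 = n+98 by omega] at ih2_2 ih3_2 ih4_2 ihg2_2 ihg3_2 ihg4_2
    rw [show n+3+96 = n+99 by omega] at ih2_3 ih3_3 ih4_3 ihg2_3 ihg3_3 ihg4_3
    have L2 : c2 (n+4+96) = c2 (n+98) + 1 := by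
      rw [show n+4+96 = (n+98)+2 by omega, c2_rec]
    have R2 : c2 (n+4) = c2 (n+2) + 1 := by
      rw [show n+4 = (n+2)+2 by omega, c2_rec]
    have L3 : c3 (n+4+96) = c3 (n+97) + c2 (n+99) := by
      rw [show n+4+96 = (n+97)+3 by omega, c3_rec, show n+97+2 = n+99 by omega]
    have R3 : c3 (n+4) = c3 (n+1) + c2 (n+3) := by
      rw [show n+4 = (n+1)+3 by omega, c3_rec, show n+1+2 = n+3 by omega]
    have L4 : c4 (n+4+96) = c4 (n+96) + c3 (n+99) := by
      rw [show n+4+96 = (n+96)+4 by omega, c4_rec, show n+96+3 = n+99 by omega]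
    have R4 : c4 (n+4) = c4 n + c3 (n+3) := by
      rw [c4_rec]
    have Lg2 : g2 (n+4+96) = g2 (n+98) + (n+99) * c2 (n+98) + (n+99) := by
      rw [show n+4+96 = (n+98)+2 by omega, g2_rec, show n+98+1 = n+99 by omega]
    have Rg2 : g2 (n+4) = g2 (n+2) + (n+3) * c2 (n+2) + (n+3) := by
      rw [show n+4 = (n+2)+2 by omega, g2_rec, show n+2+1 = n+3 by omega]
    have Lg3 : g3 (n+4+96) = g3 (n+97) + (2*(n+97)+3) * c3 (n+97) + g2 (n+99)
        + (n+99) * c2 (n+99) := by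
      rw [show n+4+96 = (n+97)+3 by omega, g3_rec, show n+97+2 = n+99 by omega]
    have Rg3 : g3 (n+4) = g3 (n+1) + (2*(n+1)+3) * c3 (n+1) + g2 (n+3)
        + (n+3) * c2 (n+3) := by
      rw [show n+4 = (n+1)+3 by omega, g3_rec, show n+1+2 = n+3 by omega]
    have Lg4 : g4 (n+4+96) = g4 (n+96) + (3*(n+96)+6) * c4 (n+96) + g3 (n+99)
        + (n+99) * c3 (n+99) := by
      rw [show n+4+96 = (n+96)+4 by omega, g4_rec, show n+96+3 = n+99 by omega]
    have Rg4 : g4 (n+4) = g4 n + (3*n+6) * c4 n + g3 (n+3) + (n+3) * c3 (n+3) := by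
      rw [g4_rec]
    refine ⟨?_, ?_, ?_, ?_, ?_, ?_⟩
    · rw [L2, R2]; omega
    · rw [L3, R3]; omega
    · rw [L4, R4]; omega
    · rw [Lg2, Rg2]
      have m2 : ((n+99) * c2 (n+98)) % 4 = ((n+3) * c2 (n+2)) % 4 :=
        Nat.ModEq.mul (show (n+99) % 4 = (n+3) % 4 by omega) ih2_2
      omega
    · rw [Lg3, Rg3]
      have m2 : ((2*(n+97)+3) * c3 (n+97)) % 4 = ((2*(n+1)+3) * c3 (n+1)) % 4 :=
        Nat.ModEq.mul (show (2*(n+97)+3) % 4 = (2*(n+1)+3) % 4 by omega) ih3_1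
      have m4 : ((n+99) * c2 (n+99)) % 4 = ((n+3) * c2 (n+3)) % 4 :=
        Nat.ModEq.mul (show (n+99) % 4 = (n+3) % 4 by omega) ih2_3
      omega
    · rw [Lg4, Rg4]
      have m2 : ((3*(n+96)+6) * c4 (n+96)) % 4 = ((3*n+6) * c4 n) % 4 :=
        Nat.ModEq.mul (show (3*(n+96)+6) % 4 = (3*n+6) % 4 by omega) ih4_0
      have m4 : ((n+99) * c3 (n+99)) % 4 = ((n+3) * c3 (n+3)) % 4 :=
        Nat.ModEq.mul (show (n+99) % 4 = (n+3) % 4 by omega) ih3_3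
      omega

lemma esymm_two (a b c d : ℕ) : ({d, c, b, a} : Multiset ℕ).esymm 2
    = a*b + a*c + a*d + b*c + b*d + c*d := by
  simp [Multiset.esymm, Multiset.powersetCard_cons, Multiset.powersetCard_zero_left,
    Multiset.powersetCard_one]
  ring

def mkPart (n : ℕ) (p : ℕ × ℕ × ℕ × ℕ) (hp : p ∈ A4 n) : Nat.Partition n where
  parts := {p.2.2.2, p.2.2.1, p.2.1, p.1}
  parts_pos := by
    rw [mem_A4] at hp
    intro x hx
    simp only [Multiset.insert_eq_cons, Multiset.mem_cons, Multiset.mem_singleton] at hx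
    rcases hx with h | h | h | h <;> omega
  parts_sum := by
    rw [mem_A4] at hp
    simp only [Multiset.insert_eq_cons, Multiset.sum_cons, Multiset.sum_singleton]
    omega

lemma sorted_of_le {a b c d : ℕ} (h1 : d ≤ c) (h2 : c ≤ b) (h3 : b ≤ a) :
    List.Pairwise (· ≤ ·) [d, c, b, a] := by
  simp only [List.pairwise_cons, List.mem_cons, List.mem_singleton, List.not_mem_nil]
  constructor
  · rintro x (rfl | rfl | rfl | h) <;> first | omega | simp at h
  constructor
  · rintro x (rfl | rfl | h) <;> first | omega | simp at h
  constructor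
  · rintro x (rfl | h) <;> first | omega | simp at h
  simp

lemma sumA4_eq (n : ℕ) : ∑ p ∈ A4 n, w4 p = e2p4 n := by
  rw [e2p4]
  refine Finset.sum_bij (fun p hp => mkPart n p hp) ?_ ?_ ?_ ?_
  · intro p hp
    simp only [mem_filter, mem_univ, true_and, mkPart]
    rfl
  · rintro ⟨a, b, c, d⟩ h1 ⟨a', b', c', d'⟩ h2 heq
    simp only [mem_A4] at h1 h2
    obtain ⟨k1, k2, k3, k4, k5⟩ := h1
    obtain ⟨m1, m2, m3, m4, m5⟩ := h2
    have hms : ({d, c, b, a} : Multiset ℕ) = {d', c', b', a'} :=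
      congrArg Nat.Partition.parts heq
    have heq' : ((↑[d, c, b, a] : Multiset ℕ)) = (↑[d', c', b', a'] : Multiset ℕ) := hms
    have hperm := Multiset.coe_eq_coe.mp heq'
    have hl := List.Perm.eq_of_pairwise' (sorted_of_le k2 k3 k4)
      (sorted_of_le m2 m3 m4) hperm
    simp only [List.cons.injEq, and_true] at hl
    simp only [Prod.ext_iff]
    tauto
  · intro π hπ
    simp only [mem_filter, mem_univ, true_and] at hπ
    obtain ⟨l, hs, hcoe, hlen⟩ :
        ∃ l : List ℕ, List.Pairwise (· ≤ ·) l ∧ (↑l : Multiset ℕ) = π.parts ∧ l.length = 4 :=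
      ⟨Multiset.sort π.parts (· ≤ ·), Multiset.pairwise_sort _ _, Multiset.sort_eq _ _, by
        rw [Multiset.length_sort]; exact hπ⟩
    rcases l with _ | ⟨x1, _ | ⟨x2, _ | ⟨x3, _ | ⟨x4, rest⟩⟩⟩⟩ <;>
      simp only [List.length] at hlen <;> try omega
    have hrest : rest = [] := by
      cases rest
      · rfl
      · simp [List.length] at hlen
    subst hrest
    have hpos : ∀ x ∈ ([x1, x2, x3, x4] : List ℕ), 0 < x := by
      intro x hx
      exact π.parts_pos (by rw [← hcoe]; exact_mod_cast hx)
    have hsum : x1 + x2 + x3 + x4 = n := by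
      have := π.parts_sum
      rw [← hcoe] at this
      simp at this
      omega
    simp only [List.pairwise_cons, List.mem_cons, List.not_mem_nil] at hs
    have p1 := hpos x1 (by simp)
    have e1 : x1 ≤ x2 := hs.1 x2 (by tauto)
    have e2 : x2 ≤ x3 := hs.2.1 x3 (by tauto)
    have e3 : x3 ≤ x4 := hs.2.2.1 x4 (by tauto)
    have hmem : (x4, x3, x2, x1) ∈ A4 n := by
      simp only [mem_A4]
      exact ⟨by omega, by omega, by omega, by omega, by omega⟩
    refine ⟨(x4, x3, x2, x1), hmem, ?_⟩
    cases π with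
    | mk parts pos psum =>
      simp only [mkPart, Nat.Partition.mk.injEq]
      exact hcoe
  · rintro ⟨a, b, c, d⟩ hp
    rw [show ((fun p hp => mkPart n p hp) (a, b, c, d) hp).parts = {d, c, b, a} from rfl,
      esymm_two]
    simp only [w4]

theorem e2p4_period_mod_four (n : ℕ) : e2p4 (n + 96) ≡ e2p4 n [MOD 4] := by
  have h1 : e2p4 (n + 96) = g4 (n + 96) := by rw [← sumA4_eq, g4_eq]
  have h2 : e2p4 n = g4 n := by rw [← sumA4_eq, g4_eq]
  show e2p4 (n + 96) % 4 = e2p4 n % 4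
  rw [h1, h2]
  exact (per n).2.2.2.2.2
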